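/- Let L be a division ring with center Z(L) and [L : Z(L)] = n < ∞. If x ∈ Z(L) can be written as a product of multiplicative commutators in L*, then xⁿ = 1. -/

import Mathlib

/-- Let `L` be a division ring with `[L : Z(L)] = n < ∞`. If `x ∈ Z(L)` is a product of
multiplicative commutators in `L*`, then `xⁿ = 1`. -/
theorem stmt_7 (L : Type*) [DivisionRing L] [Module.Finite (Subring.center L) L]
    (n : ℕ) (hn : Module.finrank (Subring.center L) L = n)
    (x : Lˣ) (hxc : (x : L) ∈ Subring.center L) (hx : x ∈ commutator Lˣ) :
    x ^ n = 1 := by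
  set K := Subring.center L
  -- The norm map as a group hom on units, into the commutative group Kˣ.
  let f : Lˣ →* Kˣ := Units.map (Algebra.norm K)
  -- It kills the commutator subgroup.
  have h1 : f x = 1 := by
    have : commutator Lˣ ≤ f.ker := by
      rw [commutator, Subgroup.commutator_le]
      intro g _ h _
      rw [MonoidHom.mem_ker, commutatorElement_def]
      simp [mul_comm]
    exact this hx
  -- But `f x = ⟨x, hxc⟩ ^ n`.
  have h2 : ((f x : Kˣ) : K) = (⟨(x : L), hxc⟩ : K) ^ n := by
    show Algebra.norm K (x : L) = _
    have := Algebra.norm_algebraMap (S := L) (⟨(x : L), hxc⟩ : K)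
    rw [hn] at this
    exact this
  rw [h1] at h2
  have h3 : ((x : L)) ^ n = 1 := by
    have := congrArg (Subtype.val) h2.symm
    simpa using this
  ext
  simpa using h3
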